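/- arXiv:math/0510160 — 4 statements merged into one kernel-verified Lean document; each statement's English description precedes it below -/
import Mathlib

section
/- Let F : C → D be a k-linear equivalence of small k-linear categories and M a D-bimodule. Then the natural map from H_0(D, M) to H_0(C, FM) is an isomorphism, where H_0 of a category E with coefficients in a bimodule N is the quotient of the direct sum of the N(x,x) by the subspace generated by all elements f·n − n·f for f : x → y and n ∈ N(y,x). -/
/-!
STATEMENT 5: For a `k`-linear equivalence `F : C ⥤ D` and a `D`-bimodule `M`,
the natural map `H₀(D, M) → H₀(C, FM)` is an isomorphism, where
`H₀(E, N) = (⊕_x N(x,x)) / span{ f·n − n·f : f : x ⟶ y, n ∈ N(y,x) }`.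
The natural map sends the class of `n` at the component `F.obj x` to the class
of `n` at the component `x`.
-/

open CategoryTheory Opposite DirectSum

/-- The relations submodule defining `H₀`. -/
def H0rel {E : Type} [SmallCategory E] [DecidableEq E] {k : Type} [Field k]
    (M : Eᵒᵖ × E ⥤ ModuleCat.{0} k) :
    Submodule k (⨁ x : E, M.obj (op x, x)) :=
  Submodule.span k {a | ∃ (x y : E) (f : x ⟶ y) (n : M.obj (op y, x)),
    a = DirectSum.of (fun x : E => M.obj (op x, x)) y
          (M.map ((𝟙 (op y), f) : (op y, x) ⟶ (op y, y)) n)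
      - DirectSum.of (fun x : E => M.obj (op x, x)) x
          (M.map ((f.op, 𝟙 x) : (op y, x) ⟶ (op x, x)) n)}

/-- `H₀` of a category with coefficients in a bimodule. -/
abbrev H₀ {E : Type} [SmallCategory E] [DecidableEq E] {k : Type} [Field k]
    (M : Eᵒᵖ × E ⥤ ModuleCat.{0} k) :=
  (⨁ x : E, M.obj (op x, x)) ⧸ H0rel M

section aux
variable {k : Type} [Field k] {E : Type} [SmallCategory E] [DecidableEq E]
  (N : Eᵒᵖ × E ⥤ ModuleCat.{0} k)

noncomputable def H0mk (x : E) : N.obj (op x, x) →ₗ[k] H₀ N :=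
  (H0rel N).mkQ ∘ₗ DirectSum.lof k E (fun x => N.obj (op x, x)) x

lemma H0mk_apply (x : E) (n : N.obj (op x, x)) :
    H0mk N x n = Submodule.Quotient.mk (DirectSum.of (fun x : E => N.obj (op x, x)) x n) := by
  simp [H0mk, DirectSum.lof_eq_of]

lemma H0mk_rel {x y : E} (f : x ⟶ y) (n : N.obj (op y, x)) :
    H0mk N y (N.map ((𝟙 (op y), f) : (op y, x) ⟶ (op y, y)) n)
      = H0mk N x (N.map ((f.op, 𝟙 x) : (op y, x) ⟶ (op x, x)) n) := by
  rw [H0mk_apply, H0mk_apply, Submodule.Quotient.eq]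
  exact Submodule.subset_span ⟨x, y, f, n, rfl⟩

lemma map_map' {k : Type} [Field k] {A : Type*} [Category A] (N : A ⥤ ModuleCat.{0} k)
    {p q r : A} (f : p ⟶ q) (g : q ⟶ r) (n : N.obj p) :
    N.map g (N.map f n) = N.map (f ≫ g) n := by
  rw [N.map_comp]; rfl

lemma map_map {p q r : Eᵒᵖ × E} (f : p ⟶ q) (g : q ⟶ r) (n : N.obj p) :
    N.map g (N.map f n) = N.map (f ≫ g) n := by
  rw [N.map_comp]; rfl

lemma H0mk_conj {a b : E} (u : a ≅ b) (m : N.obj (op b, b)) :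
    H0mk N b m = H0mk N a (N.map ((u.hom.op, u.inv) : (op b, b) ⟶ (op a, a)) m) := by
  have h := H0mk_rel N u.hom (N.map ((𝟙 (op b), u.inv) : (op b, b) ⟶ (op b, a)) m)
  rw [map_map, map_map] at h
  have e1 : ((𝟙 (op b), u.inv) : (op b, b) ⟶ (op b, a)) ≫ (𝟙 (op b), u.hom) = 𝟙 (op b, b) := by
    simp [prod_comp]
  have e2 : (((𝟙 (op b), u.inv) : (op b, b) ⟶ (op b, a)) ≫ ((u.hom.op, 𝟙 a) : (op b, a) ⟶ (op a, a)) : (op b, b) ⟶ (op a, a))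
      = (u.hom.op, u.inv) := by
    simp [prod_comp]
  rw [e1, e2, N.map_id] at h
  exact h
end aux

section main
variable {k : Type} [Field k] {C D : Type} [SmallCategory C] [Preadditive C]
  [CategoryTheory.Linear k C] [SmallCategory D] [Preadditive D]
  [CategoryTheory.Linear k D] [DecidableEq C] [DecidableEq D]
  (F : C ⥤ D) [F.IsEquivalence] (M : Dᵒᵖ × D ⥤ ModuleCat.{0} k)

lemma prodmap {x y x' y' : C} (f : op x ⟶ op y) (g : x' ⟶ y') (n) :
    (F.op.prod F ⋙ M).map ((f, g) : (op x, x') ⟶ (op y, y')) n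
      = M.map (((F.map f.unop).op, F.map g) : (op (F.obj x), F.obj x') ⟶ (op (F.obj y), F.obj y')) n := rfl

noncomputable def phi0 : (⨁ x : C, ((F.op.prod F ⋙ M).obj (op x, x) : Type)) →ₗ[k] H₀ M :=
  DirectSum.toModule k C _ (fun x => H0mk M (F.obj x))

set_option linter.unusedSectionVars false

noncomputable def phi : H₀ (F.op.prod F ⋙ M) →ₗ[k] H₀ M := by
  refine Submodule.liftQ _ (phi0 F M) (Submodule.span_le.mpr ?_)
  rintro a ⟨x, y, f, n, rfl⟩
  simp only [SetLike.mem_coe, LinearMap.mem_ker, map_sub]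
  rw [← DirectSum.lof_eq_of k, ← DirectSum.lof_eq_of k]
  erw [DirectSum.toModule_lof, DirectSum.toModule_lof]
  rw [sub_eq_zero]
  rw [prodmap, prodmap]
  have h := H0mk_rel M (F.map f) n
  have e1 : (((F.map (𝟙 (op y)).unop).op, F.map f) : (op (F.obj y), F.obj x) ⟶ (op (F.obj y), F.obj y))
      = (𝟙 (op (F.obj y)), F.map f) := by simp
  have e2 : (((F.map f.op.unop).op, F.map (𝟙 x)) : (op (F.obj y), F.obj x) ⟶ (op (F.obj x), F.obj x))
      = ((F.map f).op, 𝟙 (F.obj x)) := by simp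
  rw [e1, e2]
  exact h

noncomputable abbrev Gf := F.asEquivalence.inverse

noncomputable def eps (d : D) : F.obj ((Gf F).obj d) ≅ d :=
  F.asEquivalence.counitIso.app d

noncomputable def psi0 : (⨁ d : D, (M.obj (op d, d) : Type)) →ₗ[k] H₀ (F.op.prod F ⋙ M) :=
  DirectSum.toModule k D _ (fun d =>
    (H0mk (F.op.prod F ⋙ M) ((Gf F).obj d)).comp
      (M.map (((eps F d).hom.op, (eps F d).inv) :
        (op d, d) ⟶ (op (F.obj ((Gf F).obj d)), F.obj ((Gf F).obj d)))).hom)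

noncomputable def psi : H₀ M →ₗ[k] H₀ (F.op.prod F ⋙ M) := by
  refine Submodule.liftQ _ (psi0 F M) (Submodule.span_le.mpr ?_)
  rintro a ⟨d, e, f, n, rfl⟩
  simp only [SetLike.mem_coe, LinearMap.mem_ker, map_sub]
  rw [← DirectSum.lof_eq_of k, ← DirectSum.lof_eq_of k]
  erw [DirectSum.toModule_lof, DirectSum.toModule_lof]
  rw [sub_eq_zero]
  simp only [LinearMap.comp_apply]
  erw [map_map' M, map_map' M]
  have h := H0mk_rel (F.op.prod F ⋙ M) ((Gf F).map f)
    (M.map (((eps F e).hom.op, (eps F d).inv) :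
      (op e, d) ⟶ (op (F.obj ((Gf F).obj e)), F.obj ((Gf F).obj d))) n)
  rw [prodmap, prodmap, map_map, map_map] at h
  convert h using 3
  · congr 2
    rw [prod_comp, prod_comp]
    refine Prod.ext ?_ ?_
    · simp [eps]
    · simp [eps]
      exact F.asEquivalence.counitIso.inv.naturality f
  · congr 2
    rw [prod_comp, prod_comp]
    refine Prod.ext ?_ ?_
    · simp only [eps, ← op_comp]
      exact congrArg Quiver.Hom.op (by simp; exact (F.asEquivalence.counitIso.hom.naturality f).symm)
    · simp [eps]
      exact (Category.id_comp _).trans (Category.comp_id _).symm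

lemma phi_H0mk (x : C) (n : (F.op.prod F ⋙ M).obj (op x, x)) :
    phi F M (H0mk (F.op.prod F ⋙ M) x n) = H0mk M (F.obj x) n := by
  show phi0 F M (DirectSum.lof k C (fun x : C => ((F.op.prod F ⋙ M).obj (op x, x) : Type)) x n) = H0mk M (F.obj x) n
  rw [phi0]
  erw [DirectSum.toModule_lof]

lemma psi_H0mk (d : D) (n : M.obj (op d, d)) :
    psi F M (H0mk M d n) = H0mk (F.op.prod F ⋙ M) ((Gf F).obj d)
      (M.map (((eps F d).hom.op, (eps F d).inv) :
        (op d, d) ⟶ (op (F.obj ((Gf F).obj d)), F.obj ((Gf F).obj d))) n) := by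
  show psi0 F M (DirectSum.lof k D (fun d : D => (M.obj (op d, d) : Type)) d n)
      = H0mk (F.op.prod F ⋙ M) ((Gf F).obj d)
        (M.map (((eps F d).hom.op, (eps F d).inv) :
          (op d, d) ⟶ (op (F.obj ((Gf F).obj d)), F.obj ((Gf F).obj d))) n)
  rw [psi0]
  erw [DirectSum.toModule_lof]
  rfl

lemma phi_psi : (phi F M).comp (psi F M) = LinearMap.id := by
  apply Submodule.linearMap_qext
  apply DirectSum.linearMap_ext
  intro d
  ext n
  show phi F M (psi F M (H0mk M d n)) = H0mk M d n
  rw [psi_H0mk, phi_H0mk]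
  exact (H0mk_conj M (eps F d) n).symm

lemma psi_phi : (psi F M).comp (phi F M) = LinearMap.id := by
  apply Submodule.linearMap_qext
  apply DirectSum.linearMap_ext
  intro x
  ext n
  show psi F M (phi F M (H0mk (F.op.prod F ⋙ M) x n)) = H0mk (F.op.prod F ⋙ M) x n
  rw [phi_H0mk, psi_H0mk]
  have h := H0mk_conj (F.op.prod F ⋙ M) (F.asEquivalence.unitIso.app x)
    (show ((F.op.prod F ⋙ M).obj
        (op ((F.asEquivalence.functor ⋙ F.asEquivalence.inverse).obj x),
          (F.asEquivalence.functor ⋙ F.asEquivalence.inverse).obj x) : Type) from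
      M.map (((eps F (F.obj x)).hom.op, (eps F (F.obj x)).inv) :
        (op (F.obj x), F.obj x) ⟶ (op (F.obj ((Gf F).obj (F.obj x))), F.obj ((Gf F).obj (F.obj x)))) n)
  refine Eq.trans (h.trans ?_) rfl
  rw [prodmap]
  erw [map_map' M]
  show H0mk (F.op.prod F ⋙ M) x _ = H0mk (F.op.prod F ⋙ M) x n
  congr 1
  have e : ((((eps F (F.obj x)).hom.op, (eps F (F.obj x)).inv) :
        (op (F.obj x), F.obj x) ⟶ (op (F.obj ((Gf F).obj (F.obj x))), F.obj ((Gf F).obj (F.obj x))))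
      ≫ ((F.map (F.asEquivalence.unitIso.app x).hom.op.unop).op,
          F.map (F.asEquivalence.unitIso.app x).inv) : (op (F.obj x), F.obj x) ⟶ (op (F.obj x), F.obj x))
      = 𝟙 (op (F.obj x), F.obj x) := by
    rw [prod_comp]
    refine Prod.ext ?_ ?_
    · simp only [eps, ← op_comp]
      exact congrArg Quiver.Hom.op (F.asEquivalence.functor_unit_comp x)
    · exact F.asEquivalence.counitInv_functor_comp x
  erw [e]
  rw [M.map_id]
  rfl

end main


theorem stmt_5 (k : Type) [Field k] (C D : Type) [SmallCategory C] [Preadditive C]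
    [CategoryTheory.Linear k C] [SmallCategory D] [Preadditive D]
    [CategoryTheory.Linear k D] [DecidableEq C] [DecidableEq D]
    (F : C ⥤ D) [F.Additive] [F.Linear k] [F.IsEquivalence]
    (M : Dᵒᵖ × D ⥤ ModuleCat.{0} k) :
    ∃ e : H₀ M ≃ₗ[k] H₀ (F.op.prod F ⋙ M),
      ∀ (x : C) (n : M.obj (op (F.obj x), F.obj x)),
        e (Submodule.Quotient.mk
            (DirectSum.of (fun y : D => M.obj (op y, y)) (F.obj x) n)) =
        Submodule.Quotient.mk
          (DirectSum.of (fun x : C => ((F.op.prod F ⋙ M).obj (op x, x) : Type)) x n) := by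
  refine ⟨(LinearEquiv.ofLinear (phi F M) (psi F M) (phi_psi F M) (psi_phi F M)).symm, ?_⟩
  intro x n
  set e := (LinearEquiv.ofLinear (phi F M) (psi F M) (phi_psi F M) (psi_phi F M)).symm with he
  have h1 : e.symm (H0mk (F.op.prod F ⋙ M) x n) = H0mk M (F.obj x) n := phi_H0mk F M x n
  rw [show (Submodule.Quotient.mk (DirectSum.of (fun y : D => M.obj (op y, y)) (F.obj x) n) : H₀ M)
      = H0mk M (F.obj x) n from (H0mk_apply M (F.obj x) n).symm]
  rw [← h1, e.apply_symm_apply]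
  exact H0mk_apply (F.op.prod F ⋙ M) x n
end

section
/- Let D be a G-graded small k-linear category and C = D^1 its degree-1 (coinvariant) subcategory. Then D is strongly graded if and only if the extension C ⊆ D is kG-Galois, i.e. the canonical map β : D ⊗_C D → D ⊗ kG defined on components by f ⊗_C g ↦ Σ_{s∈G} (f ∘ g_s) ⊗ s is an isomorphism of bimodules (where g_s denotes the degree-s component of g). -/
/-!
STATEMENT 7: A `G`-graded `k`-linear category `D` with degree-1 subcategory
`C = D^1` is strongly graded iff the extension `C ⊆ D` is `kG`-Galois, i.e.
the canonical map `β : D ⊗_C D → D ⊗ kG`, determined on homogeneous generators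
by `f ⊗_C g ↦ (f ∘ g_s) ⊗ s` for `g` of degree `s`, is an isomorphism
(of bimodules, componentwise on each pair of objects).
-/

open CategoryTheory DirectSum TensorProduct

section

variable {k : Type} [Field k] {G : Type} [Group G] [DecidableEq G]
variable {D : Type} [Category D] [Preadditive D] [CategoryTheory.Linear k D] [DecidableEq D]

/-- `Σ_y D^s(z,y)·D^t(y,x)`. -/
def gradedSpan (deg : ∀ x y : D, G → Submodule k (x ⟶ y)) (s t : G) (x z : D) :
    Submodule k (x ⟶ z) :=
  Submodule.span k {h | ∃ (y : D) (g : x ⟶ y) (f : y ⟶ z),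
    g ∈ deg x y t ∧ f ∈ deg y z s ∧ h = g ≫ f}

/-- The relations defining the tensor product `D ⊗_C D` over the degree-1
subcategory `C = D^1`: `m·f ⊗ n − m ⊗ f·n` for `f` of degree `1`. -/
noncomputable def tensorRel (deg : ∀ x y : D, G → Submodule k (x ⟶ y)) (x z : D) :
    Submodule k (⨁ y : D, ((y ⟶ z) ⊗[k] (x ⟶ y))) :=
  Submodule.span k {a | ∃ (y y' : D) (f : y ⟶ y') (_ : f ∈ deg y y' 1)
      (m : y' ⟶ z) (n : x ⟶ y),
    a = DirectSum.of (fun y : D => ((y ⟶ z) ⊗[k] (x ⟶ y))) y ((f ≫ m) ⊗ₜ[k] n)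
      - DirectSum.of (fun y : D => ((y ⟶ z) ⊗[k] (x ⟶ y))) y' (m ⊗ₜ[k] (n ≫ f))}

/-- The component at `(x, z)` of the `C`-bimodule `D ⊗_C D`, `C = D^1`. -/
abbrev TensorCD (deg : ∀ x y : D, G → Submodule k (x ⟶ y)) (x z : D) :=
  (⨁ y : D, ((y ⟶ z) ⊗[k] (x ⟶ y))) ⧸ tensorRel deg x z

namespace Stmt7Aux

variable (deg : ∀ x y : D, G → Submodule k (x ⟶ y))

/-- The degree decomposition equivalence coming from internality. -/
noncomputable def dec (hint : ∀ x y : D, DirectSum.IsInternal (deg x y)) (x y : D) :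
    (x ⟶ y) ≃ₗ[k] ⨁ s : G, deg x y s :=
  (LinearEquiv.ofBijective (DirectSum.coeLinearMap (deg x y)) (hint x y)).symm

variable {deg}

lemma dec_of_mem (hint : ∀ x y : D, DirectSum.IsInternal (deg x y))
    {x y : D} {s : G} {g : x ⟶ y} (hg : g ∈ deg x y s) :
    dec deg hint x y g = DirectSum.lof k G (fun s => deg x y s) s ⟨g, hg⟩ := by
  rw [dec, LinearEquiv.symm_apply_eq]
  change g = DirectSum.coeLinearMap (deg x y) (DirectSum.lof k G (fun s => deg x y s) s ⟨g, hg⟩)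
  rw [DirectSum.lof_eq_of, DirectSum.coeLinearMap_of]

/-- Projection onto the degree-`u` component. -/
noncomputable def proj (hint : ∀ x y : D, DirectSum.IsInternal (deg x y)) (u : G) (x y : D) :
    (x ⟶ y) →ₗ[k] (x ⟶ y) :=
  (deg x y u).subtype ∘ₗ (DirectSum.component k G (fun s => deg x y s) u) ∘ₗ
    (dec deg hint x y).toLinearMap

lemma proj_apply_of_mem (hint : ∀ x y : D, DirectSum.IsInternal (deg x y))
    {x y : D} {w : G} (u : G) {g : x ⟶ y} (hg : g ∈ deg x y w) :
    proj hint u x y g = if w = u then g else 0 := by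
  rw [proj]
  simp only [LinearMap.coe_comp, Function.comp_apply, LinearEquiv.coe_coe,
    dec_of_mem hint hg]
  by_cases h : w = u
  · subst h
    simp [DirectSum.component.lof_self]
  · rw [DirectSum.component.of, dif_neg h, if_neg h, map_zero]

/-- Homogenization principle: a linear map lands in a submodule as soon as it does so
on homogeneous elements. -/
lemma hom_mem (hint : ∀ x y : D, DirectSum.IsInternal (deg x y)) {x y : D} {N : Type*}
    [AddCommGroup N] [Module k N] (L : (x ⟶ y) →ₗ[k] N) (p : Submodule k N)
    (h : ∀ (s : G) (g : x ⟶ y), g ∈ deg x y s → L g ∈ p) (g : x ⟶ y) : L g ∈ p := by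
  have h1 : (⊤ : Submodule k (x ⟶ y)) ≤ Submodule.comap L p := by
    rw [← (hint x y).submodule_iSup_eq_top]
    exact iSup_le fun s g hg => h s g hg
  exact h1 trivial

/-- Homogenization principle for equalities of linear maps. -/
lemma hom_ext (hint : ∀ x y : D, DirectSum.IsInternal (deg x y)) {x y : D} {N : Type*}
    [AddCommGroup N] [Module k N] (L L' : (x ⟶ y) →ₗ[k] N)
    (h : ∀ (s : G) (g : x ⟶ y), g ∈ deg x y s → L g = L' g) : L = L' := by
  ext g
  have := hom_mem hint (L - L') ⊥ (fun s g hg => by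
    simp [LinearMap.sub_apply, h s g hg]) g
  simpa [sub_eq_zero] using this

section Beta

variable (deg)

/-- `f ↦ (component-wise) a_s ↦ of s (a_s ≫ f)`. -/
noncomputable def Tmap (x z y : D) (f : y ⟶ z) :
    (⨁ s : G, deg x y s) →ₗ[k] (⨁ _ : G, (x ⟶ z)) :=
  DirectSum.toModule k G _ fun s =>
    (DirectSum.lof k G (fun _ : G => (x ⟶ z)) s) ∘ₗ (Linear.rightComp k x f) ∘ₗ
      (deg x y s).subtype

variable {deg}

lemma Tmap_lof (x z y : D) (f : y ⟶ z) (s : G) (v : deg x y s) :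
    Tmap deg x z y f (DirectSum.lof k G _ s v) =
      DirectSum.lof k G (fun _ : G => (x ⟶ z)) s ((v : x ⟶ y) ≫ f) := by
  rw [Tmap, DirectSum.toModule_lof]
  rfl

lemma Tmap_add (x z y : D) (f f' : y ⟶ z) :
    Tmap deg x z y (f + f') = Tmap deg x z y f + Tmap deg x z y f' := by
  refine DirectSum.linearMap_ext k fun s => ?_
  ext v
  simp [Tmap_lof, Preadditive.comp_add]

lemma Tmap_smul (x z y : D) (c : k) (f : y ⟶ z) :
    Tmap deg x z y (c • f) = c • Tmap deg x z y f := by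
  refine DirectSum.linearMap_ext k fun s => ?_
  ext v
  simp [Tmap_lof, CategoryTheory.Linear.comp_smul]

variable (deg)

/-- The canonical map `B` on the direct sum level. -/
noncomputable def Bmap (hint : ∀ x y : D, DirectSum.IsInternal (deg x y)) (x z : D) :
    (⨁ y : D, ((y ⟶ z) ⊗[k] (x ⟶ y))) →ₗ[k] (⨁ _ : G, (x ⟶ z)) :=
  DirectSum.toModule k D _ fun y => TensorProduct.lift
    (LinearMap.mk₂ k (fun f g => Tmap deg x z y f (dec deg hint x y g))
      (fun f f' g => by simp only [Tmap_add, LinearMap.add_apply])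
      (fun c f g => by simp only [Tmap_smul, LinearMap.smul_apply])
      (fun f g g' => by simp)
      (fun c f g => by rw [map_smul, map_smul]))

variable {deg}

lemma Bmap_of_tmul (hint : ∀ x y : D, DirectSum.IsInternal (deg x y)) (x z y : D)
    (f : y ⟶ z) (g : x ⟶ y) :
    Bmap deg hint x z (DirectSum.of (fun y : D => ((y ⟶ z) ⊗[k] (x ⟶ y))) y (f ⊗ₜ[k] g)) =
      Tmap deg x z y f (dec deg hint x y g) := by
  rw [← DirectSum.lof_eq_of k, Bmap, DirectSum.toModule_lof, TensorProduct.lift.tmul,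
    LinearMap.mk₂_apply]

lemma Bmap_of_tmul_homog (hint : ∀ x y : D, DirectSum.IsInternal (deg x y)) {x z y : D}
    (f : y ⟶ z) {s : G} {g : x ⟶ y} (hg : g ∈ deg x y s) :
    Bmap deg hint x z (DirectSum.of (fun y : D => ((y ⟶ z) ⊗[k] (x ⟶ y))) y (f ⊗ₜ[k] g)) =
      DirectSum.of (fun _ : G => (x ⟶ z)) s (g ≫ f) := by
  rw [Bmap_of_tmul, dec_of_mem hint hg, Tmap_lof, DirectSum.lof_eq_of]

lemma tensorRel_le_ker (hint : ∀ x y : D, DirectSum.IsInternal (deg x y))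
    (hcomp : ∀ {x y z : D} {s t : G} (g : x ⟶ y) (f : y ⟶ z),
      g ∈ deg x y t → f ∈ deg y z s → g ≫ f ∈ deg x z (s * t)) (x z : D) :
    tensorRel deg x z ≤ LinearMap.ker (Bmap deg hint x z) := by
  rw [tensorRel, Submodule.span_le]
  rintro a ⟨y, y', c, hc, m, n, rfl⟩
  simp only [SetLike.mem_coe, LinearMap.mem_ker, map_sub, sub_eq_zero]
  have key :
      (Bmap deg hint x z) ∘ₗ (DirectSum.lof k D (fun y : D => ((y ⟶ z) ⊗[k] (x ⟶ y))) y) ∘ₗ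
        (TensorProduct.mk k (y ⟶ z) (x ⟶ y) (c ≫ m)) =
      (Bmap deg hint x z) ∘ₗ (DirectSum.lof k D (fun y : D => ((y ⟶ z) ⊗[k] (x ⟶ y))) y') ∘ₗ
        (TensorProduct.mk k (y' ⟶ z) (x ⟶ y') m) ∘ₗ (Linear.rightComp k x c) := by
    refine hom_ext hint _ _ fun u n hn => ?_
    simp only [LinearMap.coe_comp, Function.comp_apply, TensorProduct.mk_apply,
      Linear.rightComp_apply, DirectSum.lof_eq_of k]
    rw [Bmap_of_tmul_homog hint _ hn, Bmap_of_tmul_homog hint _ (hcomp n c hn hc),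
      one_mul, Category.assoc]
  have h2 := LinearMap.congr_fun key n
  simpa only [LinearMap.coe_comp, Function.comp_apply, TensorProduct.mk_apply,
    Linear.rightComp_apply, DirectSum.lof_eq_of k] using h2

variable (deg)

/-- The canonical map `β` on the quotient. -/
noncomputable def betaMap (hint : ∀ x y : D, DirectSum.IsInternal (deg x y))
    (hcomp : ∀ {x y z : D} {s t : G} (g : x ⟶ y) (f : y ⟶ z),
      g ∈ deg x y t → f ∈ deg y z s → g ≫ f ∈ deg x z (s * t)) (x z : D) :
    TensorCD deg x z →ₗ[k] (⨁ _ : G, (x ⟶ z)) :=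
  Submodule.liftQ (tensorRel deg x z) (Bmap deg hint x z) (tensorRel_le_ker hint hcomp x z)

variable {deg}

lemma betaMap_mk (hint : ∀ x y : D, DirectSum.IsInternal (deg x y))
    (hcomp : ∀ {x y z : D} {s t : G} (g : x ⟶ y) (f : y ⟶ z),
      g ∈ deg x y t → f ∈ deg y z s → g ≫ f ∈ deg x z (s * t)) (x z : D)
    (a : ⨁ y : D, ((y ⟶ z) ⊗[k] (x ⟶ y))) :
    betaMap deg hint hcomp x z (Submodule.Quotient.mk a) = Bmap deg hint x z a :=
  rfl

variable (deg)

/-- One summand of the would-be inverse of `β`. -/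
noncomputable def gammaComp (x z : D) {n : ℕ} (yy : Fin n → D) (gg : ∀ i, x ⟶ yy i)
    (ff : ∀ i, yy i ⟶ x) : (x ⟶ z) →ₗ[k] TensorCD deg x z :=
  ∑ i : Fin n, (tensorRel deg x z).mkQ ∘ₗ
    (DirectSum.lof k D (fun y : D => ((y ⟶ z) ⊗[k] (x ⟶ y))) (yy i)) ∘ₗ
    ((TensorProduct.mk k (yy i ⟶ z) (x ⟶ yy i)).flip (gg i)) ∘ₗ
    (Linear.leftComp k z (ff i))

variable {deg}

lemma gammaComp_apply (x z : D) {n : ℕ} (yy : Fin n → D) (gg : ∀ i, x ⟶ yy i)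
    (ff : ∀ i, yy i ⟶ x) (h : x ⟶ z) :
    gammaComp deg x z yy gg ff h = ∑ i : Fin n, Submodule.Quotient.mk
      (DirectSum.of (fun y : D => ((y ⟶ z) ⊗[k] (x ⟶ y))) (yy i) ((ff i ≫ h) ⊗ₜ[k] gg i)) := by
  rw [gammaComp, LinearMap.sum_apply]
  refine Finset.sum_congr rfl fun i _ => ?_
  simp [DirectSum.lof_eq_of k]

end Beta

end Stmt7Aux

open Stmt7Aux in
theorem stmt_7 (deg : ∀ x y : D, G → Submodule k (x ⟶ y))
    (hinternal : ∀ x y : D, DirectSum.IsInternal (deg x y))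
    (hcomp : ∀ {x y z : D} {s t : G} (g : x ⟶ y) (f : y ⟶ z),
      g ∈ deg x y t → f ∈ deg y z s → g ≫ f ∈ deg x z (s * t))
    (hid : ∀ x : D, 𝟙 x ∈ deg x x 1) :
    (∀ (s t : G) (x z : D), gradedSpan deg s t x z = deg x z (s * t)) ↔
    ∃ β : ∀ x z : D, TensorCD deg x z ≃ₗ[k] (⨁ _ : G, (x ⟶ z)),
      ∀ (x z y : D) (f : y ⟶ z) (s : G) (g : x ⟶ y), g ∈ deg x y s →
        β x z (Submodule.Quotient.mk
            (DirectSum.of (fun y : D => ((y ⟶ z) ⊗[k] (x ⟶ y))) y (f ⊗ₜ[k] g))) =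
        DirectSum.of (fun _ : G => (x ⟶ z)) s (g ≫ f) := by
  constructor
  · -- strongly graded → Galois
    intro hsg
    -- decompositions of identities
    have hdecomp : ∀ (x : D) (s : G), ∃ (n : ℕ) (yy : Fin n → D) (gg : ∀ i, x ⟶ yy i)
        (ff : ∀ i, yy i ⟶ x), (∀ i, gg i ∈ deg x (yy i) s) ∧
        (∀ i, ff i ∈ deg (yy i) x s⁻¹) ∧ ∑ i, gg i ≫ ff i = 𝟙 x := by
      intro x s
      have h1 : (𝟙 x) ∈ gradedSpan deg s⁻¹ s x x := by
        rw [hsg s⁻¹ s x x, inv_mul_cancel]; exact hid x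
      rw [gradedSpan, Submodule.mem_span_set'] at h1
      obtain ⟨n, c, v, hv⟩ := h1
      choose yy gg ff hg hf hgf using fun i => (v i).2
      refine ⟨n, yy, fun i => c i • gg i, ff, fun i => Submodule.smul_mem _ _ (hg i), hf, ?_⟩
      rw [← hv]
      refine Finset.sum_congr rfl fun i _ => ?_
      rw [CategoryTheory.Linear.smul_comp, ← hgf i]
    choose nn yy gg ff hgg hff hsum using hdecomp
    -- the inverse map γ
    obtain ⟨γ, hγ⟩ : ∃ γ : ∀ x z : D, (⨁ _ : G, (x ⟶ z)) →ₗ[k] TensorCD deg x z,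
        ∀ (x z : D) (s : G) (h : x ⟶ z),
          γ x z (DirectSum.lof k G (fun _ : G => (x ⟶ z)) s h) =
          ∑ i, Submodule.Quotient.mk (DirectSum.of
            (fun y : D => ((y ⟶ z) ⊗[k] (x ⟶ y))) (yy x s i)
            ((ff x s i ≫ h) ⊗ₜ[k] gg x s i)) :=
      ⟨fun x z => DirectSum.toModule k G _ fun s =>
          gammaComp deg x z (yy x s) (gg x s) (ff x s),
        fun x z s h => by rw [DirectSum.toModule_lof, gammaComp_apply]⟩
    have hβγ : ∀ x z : D, (betaMap deg hinternal hcomp x z) ∘ₗ (γ x z) = LinearMap.id := by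
      intro x z
      refine DirectSum.linearMap_ext k fun s => ?_
      ext h
      simp only [LinearMap.coe_comp, Function.comp_apply, LinearMap.id_comp]
      rw [hγ, map_sum]
      have : ∀ i, betaMap deg hinternal hcomp x z (Submodule.Quotient.mk
          (DirectSum.of (fun y : D => ((y ⟶ z) ⊗[k] (x ⟶ y))) (yy x s i)
            ((ff x s i ≫ h) ⊗ₜ[k] gg x s i))) =
          DirectSum.of (fun _ : G => (x ⟶ z)) s (gg x s i ≫ ff x s i ≫ h) := by
        intro i
        rw [betaMap_mk, Bmap_of_tmul_homog hinternal _ (hgg x s i)]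
      rw [Finset.sum_congr rfl fun i _ => this i, ← map_sum]
      have : ∑ i, gg x s i ≫ ff x s i ≫ h = h := by
        calc ∑ i, gg x s i ≫ ff x s i ≫ h = (∑ i, gg x s i ≫ ff x s i) ≫ h := by
              rw [Preadditive.sum_comp]
              exact Finset.sum_congr rfl fun i _ => (Category.assoc _ _ _).symm
          _ = h := by rw [hsum x s, Category.id_comp]
        
      rw [this, DirectSum.lof_eq_of]
    have hγβ : ∀ x z : D, (γ x z) ∘ₗ (betaMap deg hinternal hcomp x z) = LinearMap.id := by
      intro x z
      refine Submodule.linearMap_qext _ ?_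
      refine DirectSum.linearMap_ext k fun y => ?_
      refine TensorProduct.ext' fun f g => ?_
      have := hom_ext hinternal
        ((γ x z ∘ₗ betaMap deg hinternal hcomp x z ∘ₗ (tensorRel deg x z).mkQ ∘ₗ
          DirectSum.lof k D (fun y : D => ((y ⟶ z) ⊗[k] (x ⟶ y))) y) ∘ₗ
          (TensorProduct.mk k (y ⟶ z) (x ⟶ y) f))
        (((tensorRel deg x z).mkQ ∘ₗ
          DirectSum.lof k D (fun y : D => ((y ⟶ z) ⊗[k] (x ⟶ y))) y) ∘ₗ
          (TensorProduct.mk k (y ⟶ z) (x ⟶ y) f))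
        (fun s g hg => by
          simp only [LinearMap.coe_comp, Function.comp_apply, TensorProduct.mk_apply,
            Submodule.mkQ_apply, DirectSum.lof_eq_of k]
          rw [betaMap_mk, Bmap_of_tmul_homog hinternal _ hg, ← DirectSum.lof_eq_of k,
            hγ]
          have hrel : ∀ i, (Submodule.Quotient.mk
              (DirectSum.of (fun y : D => ((y ⟶ z) ⊗[k] (x ⟶ y))) (yy x s i)
                ((ff x s i ≫ g ≫ f) ⊗ₜ[k] gg x s i)) :
              TensorCD deg x z) = Submodule.Quotient.mk
              (DirectSum.of (fun y : D => ((y ⟶ z) ⊗[k] (x ⟶ y))) y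
                (f ⊗ₜ[k] (gg x s i ≫ ff x s i ≫ g))) := by
            intro i
            rw [Submodule.Quotient.eq]
            have hc : ff x s i ≫ g ∈ deg (yy x s i) y 1 := by
              have := hcomp (ff x s i) g (hff x s i) hg
              rwa [mul_inv_cancel] at this
            refine Submodule.subset_span ?_
            exact ⟨yy x s i, y, ff x s i ≫ g, hc, f, gg x s i, by
              first | rfl | simp only [Category.assoc]⟩
          rw [Finset.sum_congr rfl fun i _ => hrel i]
          have : ∀ i, (Submodule.Quotient.mk
              (DirectSum.of (fun y : D => ((y ⟶ z) ⊗[k] (x ⟶ y))) y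
                (f ⊗ₜ[k] (gg x s i ≫ ff x s i ≫ g))) : TensorCD deg x z) =
              ((tensorRel deg x z).mkQ ∘ₗ
                DirectSum.lof k D (fun y : D => ((y ⟶ z) ⊗[k] (x ⟶ y))) y ∘ₗ
                (TensorProduct.mk k (y ⟶ z) (x ⟶ y) f)) (gg x s i ≫ ff x s i ≫ g) := by
            intro i
            simp [DirectSum.lof_eq_of k]
          rw [Finset.sum_congr rfl fun i _ => this i, ← map_sum]
          have hs : ∑ i, gg x s i ≫ ff x s i ≫ g = g := by
            calc ∑ i, gg x s i ≫ ff x s i ≫ g = (∑ i, gg x s i ≫ ff x s i) ≫ g := by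
                  rw [Preadditive.sum_comp]
                  exact Finset.sum_congr rfl fun i _ => (Category.assoc _ _ _).symm
              _ = g := by rw [hsum x s, Category.id_comp]
          rw [hs]
          simp [DirectSum.lof_eq_of k])
      have h2 := congrArg (fun L => L g) this
      simpa only [LinearMap.coe_comp, Function.comp_apply, TensorProduct.mk_apply,
        Submodule.mkQ_apply, LinearMap.id_apply] using h2
    refine ⟨fun x z => LinearEquiv.ofLinear (betaMap deg hinternal hcomp x z) (γ x z)
      (hβγ x z) (hγβ x z), ?_⟩
    intro x z y f s g hg
    simp only [LinearEquiv.ofLinear_apply]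
    rw [betaMap_mk, Bmap_of_tmul_homog hinternal _ hg]
  · -- Galois → strongly graded
    rintro ⟨β, hβ⟩ s t x z
    refine le_antisymm ?_ ?_
    · rw [gradedSpan, Submodule.span_le]
      rintro h ⟨y, g, f, hg, hf, rfl⟩
      exact hcomp g f hg hf
    · intro h hh
      -- Step 1 : 𝟙 z decomposes with left factors of degree s⁻¹
      set S1 : Set (z ⟶ z) :=
        {a | ∃ (y : D) (g : z ⟶ y) (f : y ⟶ z), g ∈ deg z y s⁻¹ ∧ a = g ≫ f} with hS1
      have hone1 : 𝟙 z ∈ Submodule.span k S1 := by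
        have key : ∀ ξ : TensorCD deg z z,
            DirectSum.component k G (fun _ : G => (z ⟶ z)) s⁻¹ (β z z ξ) ∈
              Submodule.span k S1 := by
          intro ξ
          obtain ⟨a, rfl⟩ := Submodule.Quotient.mk_surjective _ ξ
          induction a using DirectSum.induction_on with
          | zero => simp only [Submodule.Quotient.mk_zero, map_zero]; exact zero_mem _
          | of y tp =>
            induction tp using TensorProduct.induction_on with
            | zero => simp only [map_zero, Submodule.Quotient.mk_zero]; exact zero_mem _
            | tmul f g =>
              refine hom_mem hinternal
                ((DirectSum.component k G (fun _ : G => (z ⟶ z)) s⁻¹) ∘ₗ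
                  (β z z).toLinearMap ∘ₗ (tensorRel deg z z).mkQ ∘ₗ
                  (DirectSum.lof k D (fun y : D => ((y ⟶ z) ⊗[k] (z ⟶ y))) y) ∘ₗ
                  (TensorProduct.mk k (y ⟶ z) (z ⟶ y) f))
                (Submodule.span k S1) (fun u g hg => ?_) g
              simp only [LinearMap.coe_comp, Function.comp_apply, TensorProduct.mk_apply,
                Submodule.mkQ_apply, LinearEquiv.coe_coe, DirectSum.lof_eq_of k]
              rw [hβ z z y f u g hg, ← DirectSum.lof_eq_of k, DirectSum.component.of]
              by_cases h' : u = s⁻¹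
              · rw [dif_pos h']
                subst h'
                exact Submodule.subset_span ⟨y, g, f, hg, rfl⟩
              · rw [dif_neg h']
                exact zero_mem _
            | add a b ha hb =>
              rw [map_add, Submodule.Quotient.mk_add, map_add, map_add]
              exact add_mem ha hb
          | add a b ha hb =>
            rw [Submodule.Quotient.mk_add, map_add, map_add]
            exact add_mem ha hb
        have := key ((β z z).symm (DirectSum.of (fun _ : G => (z ⟶ z)) s⁻¹ (𝟙 z)))
        rwa [LinearEquiv.apply_symm_apply, ← DirectSum.lof_eq_of k,
          DirectSum.component.lof_self] at this
      -- Step 2 : homogenize the right factors to degree s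
      set S2 : Set (z ⟶ z) :=
        {a | ∃ (y : D) (g : z ⟶ y) (f : y ⟶ z),
          g ∈ deg z y s⁻¹ ∧ f ∈ deg y z s ∧ a = g ≫ f} with hS2
      have hone2 : 𝟙 z ∈ Submodule.span k S2 := by
        have hπ : proj hinternal 1 z z (𝟙 z) = 𝟙 z := by
          rw [proj_apply_of_mem hinternal 1 (hid z), if_pos rfl]
        have hmap : Submodule.map (proj hinternal 1 z z) (Submodule.span k S1) ≤
            Submodule.span k S2 := by
          rw [Submodule.map_span, Submodule.span_le]
          rintro _ ⟨a, ⟨y, g, f, hg, rfl⟩, rfl⟩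
          refine hom_mem hinternal
            ((proj hinternal 1 z z) ∘ₗ (Linear.leftComp k z g))
            (Submodule.span k S2) (fun w f hf => ?_) f
          simp only [LinearMap.coe_comp, Function.comp_apply, Linear.leftComp_apply]
          rw [proj_apply_of_mem hinternal 1 (hcomp g f hg hf)]
          by_cases h' : w * s⁻¹ = 1
          · rw [if_pos h']
            have hw : w = s := by
              rwa [mul_inv_eq_one] at h'
            subst hw
            exact Submodule.subset_span ⟨y, g, f, hg, hf, rfl⟩
          · rw [if_neg h']
            exact zero_mem _
        rw [← hπ]
        exact hmap ⟨𝟙 z, hone1, rfl⟩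
      -- Step 3 : compose with h
      have hmap2 : Submodule.map (Linear.leftComp k z h) (Submodule.span k S2) ≤
          gradedSpan deg s t x z := by
        rw [Submodule.map_span, Submodule.span_le]
        rintro _ ⟨a, ⟨y, g, f, hg, hf, rfl⟩, rfl⟩
        simp only [Linear.leftComp_apply]
        refine Submodule.subset_span ⟨y, h ≫ g, f, ?_, hf, by rw [Category.assoc]⟩
        have := hcomp h g hh hg
        rwa [inv_mul_cancel_left] at this
      have : h = (Linear.leftComp k z h) (𝟙 z) := by
        simp
      rw [this]
      exact hmap2 ⟨𝟙 z, hone2, rfl⟩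

end
end

section
/- Let D be a strongly G-graded small k-linear category with degree-1 subcategory C = D^1. Then the map β : D ⊗_C D → D ⊗ kG, f ⊗_C g ↦ Σ_s (f ∘ g_s) ⊗ s, admits an explicit two-sided inverse α: choosing for each object x and each s ∈ G finitely many c_{s⁻¹,i} ∈ D^{s⁻¹}(x, y_i) and d_{s,i} ∈ D^s(y_i, x) with Σ_i c_{s⁻¹,i} ∘ d_{s,i} = id_x, the map α(f ⊗ s) = Σ_i (f ∘ c_{s⁻¹,i}) ⊗_C d_{s,i} satisfies α ∘ β = id and β ∘ α = id. -/
/-!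
STATEMENT 8: For a strongly `G`-graded `k`-linear category `D` with `C = D^1`,
given for each object `x` and each `s ∈ G` finitely many
`c_{s⁻¹,i} ∈ D^{s⁻¹}(x, y_i)` and `d_{s,i} ∈ D^s(y_i, x)` with
`Σ_i c_{s⁻¹,i} ∘ d_{s,i} = id_x`, the map
`α : D ⊗ kG → D ⊗_C D`, `f ⊗ s ↦ Σ_i (f ∘ c_{s⁻¹,i}) ⊗_C d_{s,i}`, is a
two-sided inverse of `β : D ⊗_C D → D ⊗ kG`, `f ⊗_C g ↦ Σ_s (f ∘ g_s) ⊗ s`.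
-/

open CategoryTheory DirectSum TensorProduct

section

variable {k : Type} [Field k] {G : Type} [Group G] [DecidableEq G]
variable {D : Type} [Category D] [Preadditive D] [CategoryTheory.Linear k D] [DecidableEq D]

set_option linter.unusedVariables false
set_option linter.unusedSectionVars false
set_option maxHeartbeats 1000000

namespace Stmt8Aux

variable (deg : ∀ x y : D, G → Submodule k (x ⟶ y))

noncomputable def decompE (hint : ∀ x y : D, DirectSum.IsInternal (deg x y)) (x y : D) :
    (x ⟶ y) ≃ₗ[k] ⨁ s : G, deg x y s :=
  (LinearEquiv.ofBijective (DirectSum.coeLinearMap (deg x y)) (hint x y)).symm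

theorem decompE_of_mem (hint : ∀ x y : D, DirectSum.IsInternal (deg x y))
    {x y : D} {s : G} {g : x ⟶ y} (h : g ∈ deg x y s) :
    decompE deg hint x y g = DirectSum.lof k G (fun s => deg x y s) s ⟨g, h⟩ := by
  rw [decompE, LinearEquiv.symm_apply_eq]
  show g = DirectSum.coeLinearMap (deg x y) (DirectSum.lof k G (fun s => deg x y s) s ⟨g, h⟩)
  rw [lof_eq_of,
    DirectSum.coeLinearMap_of]

def compBil (x y z : D) : (x ⟶ y) →ₗ[k] (y ⟶ z) →ₗ[k] (x ⟶ z) :=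
  LinearMap.mk₂ k (fun g f => g ≫ f)
    (fun g g' f => Preadditive.add_comp _ _ _ _ _ _)
    (fun a g f => Linear.smul_comp _ _ _ _ _ _)
    (fun g f f' => Preadditive.comp_add _ _ _ _ _ _)
    (fun a g f => Linear.comp_smul _ _ _ _ _ _)

noncomputable def bilM (hint : ∀ x y : D, DirectSum.IsInternal (deg x y)) (x y z : D) :
    (x ⟶ y) →ₗ[k] (y ⟶ z) →ₗ[k] ⨁ _ : G, (x ⟶ z) :=
  (DirectSum.toModule k G ((y ⟶ z) →ₗ[k] ⨁ _ : G, (x ⟶ z)) (fun s =>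
    (LinearMap.llcomp k (y ⟶ z) (x ⟶ z) (⨁ _ : G, (x ⟶ z))
        (DirectSum.lof k G (fun _ => (x ⟶ z)) s)).comp
      ((compBil x y z).comp (deg x y s).subtype))) ∘ₗ
    (decompE deg hint x y).toLinearMap

theorem bilM_of_mem (hint : ∀ x y : D, DirectSum.IsInternal (deg x y)) {x y : D} (z : D)
    {s : G} {g : x ⟶ y} (h : g ∈ deg x y s) (f : y ⟶ z) :
    bilM deg hint x y z g f = DirectSum.of (fun _ : G => (x ⟶ z)) s (g ≫ f) := by
  rw [bilM, LinearMap.comp_apply, LinearEquiv.coe_coe, decompE_of_mem deg hint h,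
    toModule_lof]
  rfl

noncomputable def betaCore (hint : ∀ x y : D, DirectSum.IsInternal (deg x y)) (x z : D) :
    (⨁ y : D, ((y ⟶ z) ⊗[k] (x ⟶ y))) →ₗ[k] ⨁ _ : G, (x ⟶ z) :=
  DirectSum.toModule k D _ (fun y => TensorProduct.lift (bilM deg hint x y z).flip)

theorem betaCore_of (hint : ∀ x y : D, DirectSum.IsInternal (deg x y)) {x z y : D}
    (f : y ⟶ z) (g : x ⟶ y) :
    betaCore deg hint x z (DirectSum.of (fun y : D => ((y ⟶ z) ⊗[k] (x ⟶ y))) y (f ⊗ₜ[k] g)) =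
      bilM deg hint x y z g f := by
  rw [betaCore, ← lof_eq_of k, toModule_lof, lift.tmul, LinearMap.flip_apply]

theorem hom_ext (hint : ∀ x y : D, DirectSum.IsInternal (deg x y))
    {V : Type*} [AddCommGroup V] [Module k V] {x y : D}
    {L1 L2 : (x ⟶ y) →ₗ[k] V}
    (h : ∀ (s : G) (g : x ⟶ y), g ∈ deg x y s → L1 g = L2 g) : L1 = L2 := by
  ext v
  obtain ⟨a, rfl⟩ := (hint x y).surjective v
  induction a using DirectSum.induction_on with
  | zero => simp
  | of s g => simpa using h s g g.2
  | add a b ha hb => simp only [map_add, ha, hb]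

theorem ker_le (hint : ∀ x y : D, DirectSum.IsInternal (deg x y))
    (hcomp : ∀ {x y z : D} {s t : G} (g : x ⟶ y) (f : y ⟶ z),
      g ∈ deg x y t → f ∈ deg y z s → g ≫ f ∈ deg x z (s * t))
    (x z : D) :
    tensorRel deg x z ≤ LinearMap.ker (betaCore deg hint x z) := by
  rw [tensorRel, Submodule.span_le]
  rintro a ⟨y, y', f, hf, m, n, rfl⟩
  simp only [SetLike.mem_coe, LinearMap.mem_ker, map_sub, sub_eq_zero]
  have key : ((betaCore deg hint x z).comp
        ((DirectSum.lof k D (fun y : D => ((y ⟶ z) ⊗[k] (x ⟶ y))) y).comp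
          (TensorProduct.mk k (y ⟶ z) (x ⟶ y) (f ≫ m)))) =
      ((betaCore deg hint x z).comp
        ((DirectSum.lof k D (fun y : D => ((y ⟶ z) ⊗[k] (x ⟶ y))) y').comp
          ((TensorProduct.mk k (y' ⟶ z) (x ⟶ y') m).comp
            (Linear.rightComp k x f)))) := by
    apply hom_ext deg hint
    intro s n hn
    simp only [LinearMap.comp_apply, TensorProduct.mk_apply, Linear.rightComp_apply,
      lof_eq_of]
    rw [betaCore_of, betaCore_of, bilM_of_mem deg hint z hn,
      bilM_of_mem deg hint z (hcomp n f hn hf), one_mul, Category.assoc]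
  have := LinearMap.congr_fun key n
  simpa only [LinearMap.comp_apply, TensorProduct.mk_apply, Linear.rightComp_apply,
    lof_eq_of] using this

end Stmt8Aux

open Stmt8Aux

theorem stmt_8 (deg : ∀ x y : D, G → Submodule k (x ⟶ y))
    (hinternal : ∀ x y : D, DirectSum.IsInternal (deg x y))
    (hcomp : ∀ {x y z : D} {s t : G} (g : x ⟶ y) (f : y ⟶ z),
      g ∈ deg x y t → f ∈ deg y z s → g ≫ f ∈ deg x z (s * t))
    (hid : ∀ x : D, 𝟙 x ∈ deg x x 1)
    (hstrong : ∀ (s t : G) (x z : D), gradedSpan deg s t x z = deg x z (s * t))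
    -- the chosen local "Galois coordinates"
    (ι : G → D → Type) [∀ s x, Fintype (ι s x)]
    (w : ∀ s x, ι s x → D)
    (c : ∀ s x (i : ι s x), w s x i ⟶ x)
    (d : ∀ s x (i : ι s x), x ⟶ w s x i)
    (hc : ∀ s x i, c s x i ∈ deg (w s x i) x s⁻¹)
    (hd : ∀ s x i, d s x i ∈ deg x (w s x i) s)
    (hunit : ∀ s x, (∑ i : ι s x, d s x i ≫ c s x i) = 𝟙 x) :
    ∃ (β : ∀ x z : D, TensorCD deg x z →ₗ[k] (⨁ _ : G, (x ⟶ z)))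
      (α : ∀ x z : D, (⨁ _ : G, (x ⟶ z)) →ₗ[k] TensorCD deg x z),
      (∀ (x z y : D) (f : y ⟶ z) (s : G) (g : x ⟶ y), g ∈ deg x y s →
        β x z (Submodule.Quotient.mk
            (DirectSum.of (fun y : D => ((y ⟶ z) ⊗[k] (x ⟶ y))) y (f ⊗ₜ[k] g))) =
        DirectSum.of (fun _ : G => (x ⟶ z)) s (g ≫ f)) ∧
      (∀ (x z : D) (s : G) (f : x ⟶ z),
        α x z (DirectSum.of (fun _ : G => (x ⟶ z)) s f) =
        ∑ i : ι s x, Submodule.Quotient.mk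
          (DirectSum.of (fun y : D => ((y ⟶ z) ⊗[k] (x ⟶ y))) (w s x i)
            ((c s x i ≫ f) ⊗ₜ[k] d s x i))) ∧
      (∀ x z : D, (α x z).comp (β x z) = LinearMap.id) ∧
      (∀ x z : D, (β x z).comp (α x z) = LinearMap.id) := by
  classical
  set β : ∀ x z : D, TensorCD deg x z →ₗ[k] (⨁ _ : G, (x ⟶ z)) :=
    fun x z => Submodule.liftQ (tensorRel deg x z) (betaCore deg hinternal x z)
      (ker_le deg hinternal hcomp x z) with hβ
  set α : ∀ x z : D, (⨁ _ : G, (x ⟶ z)) →ₗ[k] TensorCD deg x z :=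
    fun x z => DirectSum.toModule k G _ (fun s => ∑ i : ι s x,
      (((tensorRel deg x z).mkQ.comp
        (DirectSum.lof k D (fun y : D => ((y ⟶ z) ⊗[k] (x ⟶ y))) (w s x i))).comp
          (((TensorProduct.mk k (w s x i ⟶ z) (x ⟶ w s x i)).flip (d s x i)).comp
            (Linear.leftComp k z (c s x i))))) with hα
  have hβ1 : ∀ (x z y : D) (f : y ⟶ z) (s : G) (g : x ⟶ y), g ∈ deg x y s →
      β x z (Submodule.Quotient.mk
          (DirectSum.of (fun y : D => ((y ⟶ z) ⊗[k] (x ⟶ y))) y (f ⊗ₜ[k] g))) =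
      DirectSum.of (fun _ : G => (x ⟶ z)) s (g ≫ f) := by
    intro x z y f s g hg
    rw [hβ, Submodule.liftQ_apply, betaCore_of, bilM_of_mem deg hinternal z hg]
  have hα1 : ∀ (x z : D) (s : G) (f : x ⟶ z),
      α x z (DirectSum.of (fun _ : G => (x ⟶ z)) s f) =
      ∑ i : ι s x, Submodule.Quotient.mk
        (DirectSum.of (fun y : D => ((y ⟶ z) ⊗[k] (x ⟶ y))) (w s x i)
          ((c s x i ≫ f) ⊗ₜ[k] d s x i)) := by
    intro x z s f
    rw [hα, ← lof_eq_of k, toModule_lof]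
    simp only [LinearMap.sum_apply, LinearMap.comp_apply, Linear.leftComp_apply,
      LinearMap.flip_apply, TensorProduct.mk_apply, lof_eq_of, Submodule.mkQ_apply]
  refine ⟨β, α, hβ1, hα1, ?_, ?_⟩
  · -- α ∘ β = id
    intro x z
    apply Submodule.linearMap_qext
    apply DirectSum.linearMap_ext
    intro y
    apply TensorProduct.ext'
    intro f g
    have key : ((((α x z).comp (β x z)).comp
          ((tensorRel deg x z).mkQ.comp
            (DirectSum.lof k D (fun y : D => ((y ⟶ z) ⊗[k] (x ⟶ y))) y))).comp
          (TensorProduct.mk k (y ⟶ z) (x ⟶ y) f)) =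
        ((LinearMap.id.comp
          ((tensorRel deg x z).mkQ.comp
            (DirectSum.lof k D (fun y : D => ((y ⟶ z) ⊗[k] (x ⟶ y))) y))).comp
          (TensorProduct.mk k (y ⟶ z) (x ⟶ y) f)) := by
      apply hom_ext deg hinternal
      intro s g hg
      simp only [LinearMap.comp_apply, TensorProduct.mk_apply, lof_eq_of,
        Submodule.mkQ_apply, LinearMap.id_apply]
      rw [hβ1 x z y f s g hg, hα1]
      have hrel : ∀ i : ι s x,
          (Submodule.Quotient.mk
            (DirectSum.of (fun y : D => ((y ⟶ z) ⊗[k] (x ⟶ y))) (w s x i)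
              ((c s x i ≫ g ≫ f) ⊗ₜ[k] d s x i)) :
            TensorCD deg x z) =
          Submodule.Quotient.mk
            (DirectSum.of (fun y : D => ((y ⟶ z) ⊗[k] (x ⟶ y))) y
              (f ⊗ₜ[k] (d s x i ≫ c s x i ≫ g))) := by
        intro i
        rw [Submodule.Quotient.eq]
        rw [tensorRel]
        apply Submodule.subset_span
        refine ⟨w s x i, y, c s x i ≫ g, ?_, f, d s x i, ?_⟩
        · have := hcomp (c s x i) g (hc s x i) hg
          rwa [mul_inv_cancel] at this
        · rw [Category.assoc]
      rw [Finset.sum_congr rfl (fun i _ => hrel i)]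
      simp only [← Submodule.mkQ_apply]
      rw [← map_sum, ← map_sum (DirectSum.of (fun y : D => ((y ⟶ z) ⊗[k] (x ⟶ y))) y),
        ← TensorProduct.tmul_sum]
      congr 2
      simp only [← Category.assoc]
      rw [← Preadditive.sum_comp, hunit, Category.id_comp]
    have := LinearMap.congr_fun key g
    simpa only [LinearMap.comp_apply, TensorProduct.mk_apply, lof_eq_of,
      Submodule.mkQ_apply, LinearMap.id_apply] using this
  · -- β ∘ α = id
    intro x z
    apply DirectSum.linearMap_ext
    intro s
    ext f
    simp only [LinearMap.comp_apply, lof_eq_of, LinearMap.id_apply]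
    rw [hα1]
    rw [map_sum]
    have : ∀ i : ι s x,
        β x z (Submodule.Quotient.mk
          (DirectSum.of (fun y : D => ((y ⟶ z) ⊗[k] (x ⟶ y))) (w s x i)
            ((c s x i ≫ f) ⊗ₜ[k] d s x i))) =
        DirectSum.of (fun _ : G => (x ⟶ z)) s (d s x i ≫ c s x i ≫ f) :=
      fun i => hβ1 x z (w s x i) (c s x i ≫ f) s (d s x i) (hd s x i)
    rw [Finset.sum_congr rfl (fun i _ => this i)]
    rw [← map_sum (DirectSum.of (fun _ : G => (x ⟶ z)) s)]
    congr 1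
    simp only [← Category.assoc]
    rw [← Preadditive.sum_comp, hunit, Category.id_comp]


end
end

section
/- Let C be a small k-linear category with an action of a group G, and set D = C # kG (the smash product category). Then D is a G-graded k-linear category, with D^g(x,y) = C(x,y) ⊗ kg, and moreover D is strongly graded; consequently the extension C ⊆ D is kG-Galois. -/
/-!
STATEMENT 10: Let `C` be a small `k`-linear category with an action of a group
`G` and let `D = C # kG` be the smash product category: `D` has the same
objects as `C`, its hom-spaces decompose as `⊕_{g ∈ G} C(x,y) ⊗ kg`, and
composition of homogeneous elements is `(f # s)(g # t) = (f ∘ (s·g)) # st`.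
Then this decomposition makes `D` a strongly `G`-graded category, and
consequently the extension `C = D^1 ⊆ D` is `kG`-Galois.

The smash product is axiomatized: `D` is a `k`-linear category with the same
objects as `C` (via `e`), a `G`-indexed family of submodules `deg` of its
hom-spaces forming an internal direct sum compatible with composition, and
`k`-linear identifications `φ s : C(x,y) ≅ D^s(e x, e y)` under which
composition is the smash composition.
-/

open CategoryTheory DirectSum TensorProduct

section

variable {k : Type} [Field k] {G : Type} [Group G] [DecidableEq G]
variable {D : Type} [Category D] [Preadditive D] [CategoryTheory.Linear k D] [DecidableEq D]

set_option linter.unusedSectionVars false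

section Aux

variable {k : Type} [Field k] {G : Type} [Group G] [DecidableEq G]
variable {D : Type} [Category D] [Preadditive D] [CategoryTheory.Linear k D] [DecidableEq D]
variable (deg : ∀ x y : D, G → Submodule k (x ⟶ y))

/-- The decomposition isomorphism coming from an internal direct sum. -/
noncomputable def decompE (hint : ∀ x y : D, DirectSum.IsInternal (deg x y)) (x y : D) :
    (x ⟶ y) ≃ₗ[k] ⨁ s : G, deg x y s :=
  (LinearEquiv.ofBijective (DirectSum.coeLinearMap (deg x y)) (hint x y)).symm

variable (hint : ∀ x y : D, DirectSum.IsInternal (deg x y))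

theorem coe_decompE {x y : D} (n : x ⟶ y) :
    DirectSum.coeLinearMap (deg x y) (decompE deg hint x y n) = n :=
  (LinearEquiv.ofBijective (DirectSum.coeLinearMap (deg x y)) (hint x y)).apply_symm_apply n

theorem decompE_of_mem {x y : D} {s : G} {g : x ⟶ y} (hg : g ∈ deg x y s) :
    decompE deg hint x y g = DirectSum.lof k G (fun s => deg x y s) s ⟨g, hg⟩ := by
  refine (decompE deg hint x y).symm.injective ?_
  rw [LinearEquiv.symm_apply_apply]
  show _ = DirectSum.coeLinearMap (deg x y) _
  rw [DirectSum.lof_eq_of, DirectSum.coeLinearMap_of]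

end Aux

set_option linter.unusedSectionVars false

section Aux2

variable {k : Type} [Field k] {G : Type} [Group G] [DecidableEq G]
variable {D : Type} [Category D] [Preadditive D] [CategoryTheory.Linear k D] [DecidableEq D]
variable (deg : ∀ x y : D, G → Submodule k (x ⟶ y))

noncomputable def innerF (x y z : D) (f : y ⟶ z) :
    (⨁ s : G, deg x y s) →ₗ[k] (⨁ _ : G, (x ⟶ z)) :=
  DirectSum.toModule k G _ (fun s => (DirectSum.lof k G (fun _ => (x ⟶ z)) s) ∘ₗ
    ((Linear.rightComp k x f) ∘ₗ (deg x y s).subtype))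

theorem innerF_lof (x y z : D) (f : y ⟶ z) (s : G) (u : deg x y s) :
    innerF deg x y z f (DirectSum.lof k G (fun s => deg x y s) s u) =
      DirectSum.lof k G (fun _ => (x ⟶ z)) s ((u : x ⟶ y) ≫ f) := by
  rw [innerF, DirectSum.toModule_lof]; rfl

theorem innerF_add (x y z : D) (f₁ f₂ : y ⟶ z) :
    innerF deg x y z (f₁ + f₂) = innerF deg x y z f₁ + innerF deg x y z f₂ := by
  refine DirectSum.linearMap_ext k fun s => ?_
  ext u
  simp [innerF_lof, Preadditive.comp_add]

theorem innerF_smul (x y z : D) (c : k) (f : y ⟶ z) :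
    innerF deg x y z (c • f) = c • innerF deg x y z f := by
  refine DirectSum.linearMap_ext k fun s => ?_
  ext u
  simp [innerF_lof, CategoryTheory.Linear.comp_smul]

variable (hint : ∀ x y : D, DirectSum.IsInternal (deg x y))

noncomputable def innerMap (x y z : D) :
    (y ⟶ z) →ₗ[k] (x ⟶ y) →ₗ[k] (⨁ _ : G, (x ⟶ z)) :=
  LinearMap.mk₂ k (fun f g => innerF deg x y z f (decompE deg hint x y g))
    (fun f₁ f₂ g => by rw [innerF_add]; rfl)
    (fun c f g => by rw [innerF_smul]; rfl)
    (fun f g₁ g₂ => by rw [map_add, map_add])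
    (fun c f g => by rw [map_smul, map_smul])

noncomputable def bigB (x z : D) :
    (⨁ y : D, ((y ⟶ z) ⊗[k] (x ⟶ y))) →ₗ[k] (⨁ _ : G, (x ⟶ z)) :=
  DirectSum.toModule k D _ (fun y => TensorProduct.lift (innerMap deg hint x y z))

theorem bigB_of_tmul {x z y : D} (f : y ⟶ z) {s : G} {g : x ⟶ y} (hg : g ∈ deg x y s) :
    bigB deg hint x z (DirectSum.of (fun y : D => ((y ⟶ z) ⊗[k] (x ⟶ y))) y (f ⊗ₜ[k] g)) =
    DirectSum.of (fun _ : G => (x ⟶ z)) s (g ≫ f) := by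
  rw [← DirectSum.lof_eq_of k, bigB, DirectSum.toModule_lof, TensorProduct.lift.tmul]
  simp only [innerMap, LinearMap.mk₂_apply]
  rw [decompE_of_mem deg hint hg, innerF_lof, DirectSum.lof_eq_of]

end Aux2

section Aux3

variable {k : Type} [Field k] {G : Type} [Group G] [DecidableEq G]
variable {D : Type} [Category D] [Preadditive D] [CategoryTheory.Linear k D] [DecidableEq D]
variable (deg : ∀ x y : D, G → Submodule k (x ⟶ y))
variable (hint : ∀ x y : D, DirectSum.IsInternal (deg x y))

theorem tensorRel_le_ker
    (hcomp : ∀ {x y z : D} {s t : G} (g : x ⟶ y) (f : y ⟶ z),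
      g ∈ deg x y t → f ∈ deg y z s → g ≫ f ∈ deg x z (s * t))
    (x z : D) :
    tensorRel deg x z ≤ LinearMap.ker (bigB deg hint x z) := by
  rw [tensorRel, Submodule.span_le]
  rintro a ⟨y, y', f, hf, m, n, rfl⟩
  rw [SetLike.mem_coe, LinearMap.mem_ker, map_sub, sub_eq_zero]
  have key : ∀ a : ⨁ s : G, deg x y s,
      bigB deg hint x z (DirectSum.of (fun y : D => ((y ⟶ z) ⊗[k] (x ⟶ y))) y
        ((f ≫ m) ⊗ₜ[k] DirectSum.coeLinearMap (deg x y) a))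
      = bigB deg hint x z (DirectSum.of (fun y : D => ((y ⟶ z) ⊗[k] (x ⟶ y))) y'
        (m ⊗ₜ[k] (DirectSum.coeLinearMap (deg x y) a ≫ f))) := by
    intro a
    induction a using DirectSum.induction_on with
    | zero => simp
    | of s u =>
      rcases u with ⟨u, hu⟩
      rw [DirectSum.coeLinearMap_of]
      have hu' : u ≫ f ∈ deg x y' s := by
        have := hcomp u f hu hf; rwa [one_mul] at this
      rw [bigB_of_tmul deg hint _ hu, bigB_of_tmul deg hint _ hu', Category.assoc]
    | add a b ha hb =>
      simp only [map_add, TensorProduct.tmul_add, TensorProduct.add_tmul,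
        Preadditive.add_comp, ha, hb]
  have h2 := key (decompE deg hint x y n)
  rwa [coe_decompE] at h2

noncomputable def psiMap (u v : ∀ (x : D) (s : G), x ⟶ x) (x z : D) :
    (⨁ _ : G, (x ⟶ z)) →ₗ[k] TensorCD deg x z :=
  DirectSum.toModule k G _ (fun s =>
    ((tensorRel deg x z).mkQ ∘ₗ DirectSum.lof k D (fun y : D => ((y ⟶ z) ⊗[k] (x ⟶ y))) x) ∘ₗ
      (((TensorProduct.mk k (x ⟶ z) (x ⟶ x)).flip (u x s)) ∘ₗ Linear.leftComp k z (v x s)))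

theorem psiMap_lof (u v : ∀ (x : D) (s : G), x ⟶ x) (x z : D) (s : G) (h : x ⟶ z) :
    psiMap deg u v x z (DirectSum.lof k G (fun _ => (x ⟶ z)) s h) =
    Submodule.Quotient.mk (DirectSum.of (fun y : D => ((y ⟶ z) ⊗[k] (x ⟶ y))) x
      ((v x s ≫ h) ⊗ₜ[k] u x s)) := by
  rw [psiMap, DirectSum.toModule_lof]
  rfl

end Aux3


theorem stmt_10 {C : Type} [Category C] [Preadditive C] [CategoryTheory.Linear k C]
    -- the `G`-action on `C`, fixing objects (each hom-space is a `G`-module)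
    (act : ∀ (s : G) (x y : C), (x ⟶ y) →ₗ[k] (x ⟶ y))
    (act_one : ∀ (x y : C) (f : x ⟶ y), act 1 x y f = f)
    (act_mul : ∀ (s t : G) (x y : C) (f : x ⟶ y),
      act (s * t) x y f = act s x y (act t x y f))
    (act_id : ∀ (s : G) (x : C), act s x x (𝟙 x) = 𝟙 x)
    (act_comp : ∀ (s : G) {x y z : C} (g : x ⟶ y) (f : y ⟶ z),
      act s x z (g ≫ f) = act s x y g ≫ act s y z f)
    -- `D` is the smash product `C # kG`:
    (e : C ≃ D)                                      -- same objects
    (deg : ∀ x y : D, G → Submodule k (x ⟶ y))       -- the grading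
    (hinternal : ∀ x y : D, DirectSum.IsInternal (deg x y))
    (hcomp : ∀ {x y z : D} {s t : G} (g : x ⟶ y) (f : y ⟶ z),
      g ∈ deg x y t → f ∈ deg y z s → g ≫ f ∈ deg x z (s * t))
    (hid : ∀ x : D, 𝟙 x ∈ deg x x 1)
    -- `D^s(e x, e y) ≅ C(x,y) ⊗ k·s`
    (φ : ∀ (s : G) (x y : C), (x ⟶ y) ≃ₗ[k] deg (e x) (e y) s)
    -- homogeneous composition in `D` is the smash composition
    (hφ : ∀ (s t : G) {x y z : C} (g : x ⟶ y) (f : y ⟶ z),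
      ((φ t x y g : deg (e x) (e y) t) : (e x ⟶ e y)) ≫
        ((φ s y z f : deg (e y) (e z) s) : (e y ⟶ e z)) =
      ((φ (s * t) x z (act s x y g ≫ f) : deg (e x) (e z) (s * t)) : (e x ⟶ e z)))
    (hφ_id : ∀ x : C, ((φ 1 x x (𝟙 x) : deg (e x) (e x) 1) : (e x ⟶ e x)) = 𝟙 (e x)) :
    -- `D` is strongly graded ...
    (∀ (s t : G) (x z : D), gradedSpan deg s t x z = deg x z (s * t)) ∧
    -- ... and `C = D^1 ⊆ D` is `kG`-Galois
    ∃ β : ∀ x z : D, TensorCD deg x z ≃ₗ[k] (⨁ _ : G, (x ⟶ z)),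
      ∀ (x z y : D) (f : y ⟶ z) (s : G) (g : x ⟶ y), g ∈ deg x y s →
        β x z (Submodule.Quotient.mk
            (DirectSum.of (fun y : D => ((y ⟶ z) ⊗[k] (x ⟶ y))) y (f ⊗ₜ[k] g))) =
        DirectSum.of (fun _ : G => (x ⟶ z)) s (g ≫ f) := by
  classical
  have hunit : ∀ (x : D) (s : G), ∃ u v : x ⟶ x,
      u ∈ deg x x s ∧ v ∈ deg x x s⁻¹ ∧ u ≫ v = 𝟙 x ∧ v ≫ u = 𝟙 x := by
    intro x s
    obtain ⟨x₀, rfl⟩ := e.surjective x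
    refine ⟨((φ s x₀ x₀ (𝟙 x₀) : deg (e x₀) (e x₀) s) : e x₀ ⟶ e x₀),
      ((φ s⁻¹ x₀ x₀ (𝟙 x₀) : deg (e x₀) (e x₀) s⁻¹) : e x₀ ⟶ e x₀),
      (φ s x₀ x₀ (𝟙 x₀)).2, (φ s⁻¹ x₀ x₀ (𝟙 x₀)).2, ?_, ?_⟩
    · have h := hφ s⁻¹ s (𝟙 x₀) (𝟙 x₀)
      rw [act_id, Category.id_comp, inv_mul_cancel, hφ_id] at h
      exact h
    · have h := hφ s s⁻¹ (𝟙 x₀) (𝟙 x₀)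
      rw [act_id, Category.id_comp, mul_inv_cancel, hφ_id] at h
      exact h
  choose u v hu hv huv hvu using hunit
  constructor
  · intro s t x z
    refine le_antisymm ?_ ?_
    · rw [gradedSpan, Submodule.span_le]
      rintro h ⟨y, g, f, hg, hf, rfl⟩
      exact hcomp g f hg hf
    · intro h hh
      obtain ⟨x₀, rfl⟩ := e.surjective x
      obtain ⟨z₀, rfl⟩ := e.surjective z
      set c := (φ (s * t) x₀ z₀).symm ⟨h, hh⟩ with hc
      have h1 := hφ s t (𝟙 x₀) c
      rw [act_id, Category.id_comp] at h1
      have h2 : ((φ (s * t) x₀ z₀ c : deg (e x₀) (e z₀) (s * t)) : e x₀ ⟶ e z₀) = h := by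
        rw [hc, LinearEquiv.apply_symm_apply]
      apply Submodule.subset_span
      exact ⟨e x₀, _, _, (φ t x₀ x₀ (𝟙 x₀)).2, (φ s x₀ z₀ c).2, by rw [h1, h2]⟩
  · have hker := tensorRel_le_ker deg hinternal @hcomp
    have h1 : ∀ x z : D,
        ((tensorRel deg x z).liftQ (bigB deg hinternal x z) (hker x z)) ∘ₗ
          psiMap deg u v x z = LinearMap.id := by
      intro x z
      refine DirectSum.linearMap_ext k fun s => ?_
      ext h
      simp only [LinearMap.comp_apply, LinearMap.id_apply]
      rw [psiMap_lof, Submodule.liftQ_apply, bigB_of_tmul deg hinternal _ (hu x s),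
        ← Category.assoc, huv, Category.id_comp, DirectSum.lof_eq_of k]
    have h2 : ∀ x z : D,
        psiMap deg u v x z ∘ₗ
          ((tensorRel deg x z).liftQ (bigB deg hinternal x z) (hker x z)) = LinearMap.id := by
      intro x z
      refine Submodule.linearMap_qext _ ?_
      rw [LinearMap.comp_assoc, Submodule.liftQ_mkQ, LinearMap.id_comp]
      refine DirectSum.linearMap_ext k fun y => ?_
      refine TensorProduct.ext' fun f n => ?_
      simp only [LinearMap.comp_apply]
      have key : ∀ a : ⨁ s : G, deg x y s,
          psiMap deg u v x z (bigB deg hinternal x z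
            (DirectSum.of (fun y : D => ((y ⟶ z) ⊗[k] (x ⟶ y))) y
              (f ⊗ₜ[k] DirectSum.coeLinearMap (deg x y) a)))
          = Submodule.Quotient.mk (DirectSum.of (fun y : D => ((y ⟶ z) ⊗[k] (x ⟶ y))) y
              (f ⊗ₜ[k] DirectSum.coeLinearMap (deg x y) a)) := by
        intro a
        induction a using DirectSum.induction_on with
        | zero => simp
        | of s g0 =>
          rcases g0 with ⟨g, hg⟩
          rw [DirectSum.coeLinearMap_of, bigB_of_tmul deg hinternal f hg,
            ← DirectSum.lof_eq_of k, psiMap_lof, Submodule.Quotient.eq]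
          apply Submodule.subset_span
          have hvg : v x s ≫ g ∈ deg x y 1 := by
            have hh := hcomp (v x s) g (hv x s) hg
            rwa [mul_inv_cancel] at hh
          refine ⟨x, y, v x s ≫ g, hvg, f, u x s, ?_⟩
          have huvg : u x s ≫ v x s ≫ g = g := by
            rw [← Category.assoc, huv, Category.id_comp]
          rw [Category.assoc, huvg]
        | add a b ha hb =>
          simp only [map_add, TensorProduct.tmul_add, ha, hb,
            ← Submodule.Quotient.mk_add]
      have h3 := key (decompE deg hinternal x y n)
      rw [coe_decompE] at h3
      simpa [DirectSum.lof_eq_of] using h3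
    refine ⟨fun x z => LinearEquiv.ofLinear
      ((tensorRel deg x z).liftQ (bigB deg hinternal x z) (hker x z))
      (psiMap deg u v x z) (h1 x z) (h2 x z), ?_⟩
    intro x z y f s g hg
    rw [LinearEquiv.ofLinear_apply, Submodule.liftQ_apply, bigB_of_tmul deg hinternal f hg]

end
end
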